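/- arXiv:1702.01666 — 2 statements merged into one kernel-verified Lean document; each statement's English description precedes it below -/
import Mathlib

section
/- Fix a real α > 1 and a constant c > 0, and set d = c(α−1)/α. There exist constants δ₀ > 0, c' > 0 and k₀ ∈ ℕ, depending only on α and c, such that for every k ≥ k₀ the following holds. Let q be the distribution on A = {1,…,k} with q_1 = k^{−c} and q_i = (1 − k^{−c})/(k−1) for i ≥ 2. Then any function f : A^n → ℝ that is a (δ₀, 1/3)-estimator of D_α(·‖q) on the set of all distributions on A must satisfy n ≥ c' · k^{d}. In particular, if c = ω(1) as a function of k, the sample complexity is super-polynomial in k. -/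
open Finset Real

/-- `p` is a probability distribution on `Fin k`. -/
def IsDist {k : ℕ} (p : Fin k → ℝ) : Prop := (∀ i, 0 ≤ p i) ∧ ∑ i, p i = 1

/-- Rényi divergence of order `α` of `p` from `q`. -/
noncomputable def renyiDiv {k : ℕ} (α : ℝ) (p q : Fin k → ℝ) : ℝ :=
  (1 / (α - 1)) * Real.log (∑ i, p i ^ α * q i ^ (1 - α))

/-- Probability, under `n` i.i.d. samples from `p`, of the event `E`. -/
noncomputable def iidProb {k : ℕ} (n : ℕ) (p : Fin k → ℝ)
    (E : Set (Fin n → Fin k)) : ℝ :=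
  ∑ x : Fin n → Fin k, Set.indicator E (fun y => ∏ j, p (y j)) x

/-- `f` is a `(δ, ε)`-estimator of the Rényi `α`-divergence to `q`,
on the set of all distributions on `Fin k`. -/
def IsEstimator {k : ℕ} (n : ℕ) (α δ ε : ℝ) (q : Fin k → ℝ)
    (f : (Fin n → Fin k) → ℝ) : Prop :=
  ∀ p : Fin k → ℝ, IsDist p →
    iidProb n p {x | δ < |f x - renyiDiv α p q|} < ε

/- ---------- auxiliary lemmas ---------- -/

lemma sum_if_val_zero {k : ℕ} (hk : 0 < k) (a b : ℝ) :
    ∑ i : Fin k, (if (i : ℕ) = 0 then a else b) = a + ((k : ℝ) - 1) * b := by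
  have h : ∀ i : Fin k, (if (i : ℕ) = 0 then a else b)
      = b + (if i = (⟨0, hk⟩ : Fin k) then a - b else 0) := by
    intro i
    by_cases h : (i : ℕ) = 0
    · simp [h, Fin.ext_iff]
    · simp [h, Fin.ext_iff]
  rw [Finset.sum_congr rfl fun i _ => h i, Finset.sum_add_distrib,
    Finset.sum_const, Finset.sum_ite_eq' univ (⟨0, hk⟩ : Fin k) (fun _ => a - b)]
  simp [Finset.card_univ]
  ring

lemma sum_prod_pi {k n : ℕ} (p : Fin k → ℝ) :
    ∑ x : Fin n → Fin k, ∏ j, p (x j) = (∑ i, p i) ^ n := by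
  rw [show ((∑ i, p i) ^ n) = ∏ _j : Fin n, ∑ i, p i by
    rw [Finset.prod_const, Finset.card_univ, Fintype.card_fin]]
  rw [Finset.prod_univ_sum, Fintype.piFinset_univ]

lemma sum_cons {k n : ℕ} (g : (Fin (n+1) → Fin k) → ℝ) :
    ∑ x : Fin (n+1) → Fin k, g x
      = ∑ i : Fin k, ∑ y : Fin n → Fin k, g (Fin.cons i y) := by
  rw [← (Fintype.sum_equiv (Fin.consEquiv fun _ => Fin k)
      (fun z => g ((Fin.consEquiv fun _ => Fin k) z)) (fun x => g x) (fun z => rfl))]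
  rw [Fintype.sum_prod_type]
  rfl

lemma tv_prod {k : ℕ} (p r : Fin k → ℝ) (hp : ∀ i, 0 ≤ p i)
    (hr : ∀ i, 0 ≤ r i) (hp1 : ∑ i, p i = 1) (hr1 : ∑ i, r i = 1) :
    ∀ n : ℕ, ∑ x : Fin n → Fin k, |(∏ j, p (x j)) - ∏ j, r (x j)|
      ≤ n * ∑ i, |p i - r i| := by
  intro n
  induction n with
  | zero => simp
  | succ n ih =>
    rw [sum_cons (fun x => |(∏ j, p (x j)) - ∏ j, r (x j)|)]
    have key : ∀ i : Fin k, ∀ y : Fin n → Fin k,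
        |(∏ j, p ((Fin.cons i y : Fin (n+1) → Fin k) j))
            - ∏ j, r ((Fin.cons i y : Fin (n+1) → Fin k) j)|
          ≤ |p i - r i| * (∏ j, p (y j))
            + r i * |(∏ j, p (y j)) - ∏ j, r (y j)| := by
      intro i y
      rw [Fin.prod_univ_succ, Fin.prod_univ_succ]
      simp only [Fin.cons_zero, Fin.cons_succ]
      have hP : 0 ≤ ∏ j, p (y j) := Finset.prod_nonneg fun j _ => hp _
      calc |p i * ∏ j, p (y j) - r i * ∏ j, r (y j)|
          = |(p i - r i) * (∏ j, p (y j))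
              + r i * ((∏ j, p (y j)) - ∏ j, r (y j))| := by ring_nf
        _ ≤ |(p i - r i) * (∏ j, p (y j))|
              + |r i * ((∏ j, p (y j)) - ∏ j, r (y j))| := abs_add_le _ _
        _ = |p i - r i| * (∏ j, p (y j))
              + r i * |(∏ j, p (y j)) - ∏ j, r (y j)| := by
            rw [abs_mul, abs_mul, abs_of_nonneg hP, abs_of_nonneg (hr i)]
    calc ∑ i : Fin k, ∑ y : Fin n → Fin k,
          |(∏ j, p ((Fin.cons i y : Fin (n+1) → Fin k) j))
            - ∏ j, r ((Fin.cons i y : Fin (n+1) → Fin k) j)|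
        ≤ ∑ i : Fin k, ∑ y : Fin n → Fin k,
            (|p i - r i| * (∏ j, p (y j))
              + r i * |(∏ j, p (y j)) - ∏ j, r (y j)|) := by
          refine Finset.sum_le_sum fun i _ => Finset.sum_le_sum fun y _ => key i y
      _ = (∑ i, |p i - r i|) * (∑ y : Fin n → Fin k, ∏ j, p (y j))
          + (∑ i, r i) * ∑ y : Fin n → Fin k, |(∏ j, p (y j)) - ∏ j, r (y j)| := by
          simp only [Finset.sum_add_distrib, ← Finset.mul_sum]
          rw [← Finset.sum_mul, ← Finset.sum_mul]
      _ ≤ (∑ i, |p i - r i|) * 1 + 1 * (n * ∑ i, |p i - r i|) := by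
          rw [sum_prod_pi p, hp1, one_pow, hr1]
          have h0 : 0 ≤ ∑ i, |p i - r i| := Finset.sum_nonneg fun i _ => abs_nonneg _
          nlinarith [ih]
      _ = (↑(n+1)) * ∑ i, |p i - r i| := by push_cast; ring

lemma iidProb_compl {k n : ℕ} (p : Fin k → ℝ) (h1 : ∑ i, p i = 1)
    (E : Set (Fin n → Fin k)) :
    iidProb n p Eᶜ = 1 - iidProb n p E := by
  unfold iidProb
  have h : ∀ x : Fin n → Fin k,
      Set.indicator Eᶜ (fun y => ∏ j, p (y j)) x
        = (∏ j, p (x j)) - Set.indicator E (fun y => ∏ j, p (y j)) x := by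
    intro x
    by_cases hx : x ∈ E <;>
      simp [Set.indicator_of_mem, Set.indicator_of_notMem, hx]
  rw [Finset.sum_congr rfl fun x _ => h x, Finset.sum_sub_distrib,
    sum_prod_pi, h1, one_pow]

lemma iidProb_mono {k n : ℕ} (p : Fin k → ℝ) (hp : ∀ i, 0 ≤ p i)
    {E F : Set (Fin n → Fin k)} (hEF : E ⊆ F) :
    iidProb n p E ≤ iidProb n p F := by
  refine Finset.sum_le_sum fun x _ => ?_
  exact Set.indicator_le_indicator_of_subset hEF
    (fun y => Finset.prod_nonneg fun j _ => hp _) x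

lemma iidProb_diff {k n : ℕ} (p r : Fin k → ℝ) (hp : ∀ i, 0 ≤ p i)
    (hr : ∀ i, 0 ≤ r i) (hp1 : ∑ i, p i = 1) (hr1 : ∑ i, r i = 1)
    (E : Set (Fin n → Fin k)) :
    iidProb n p E - iidProb n r E ≤ n * ∑ i, |p i - r i| := by
  have h1 : iidProb n p E - iidProb n r E
      ≤ ∑ x : Fin n → Fin k, |(∏ j, p (x j)) - ∏ j, r (x j)| := by
    unfold iidProb
    rw [← Finset.sum_sub_distrib]
    refine Finset.sum_le_sum fun x _ => ?_
    by_cases hx : x ∈ E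
    · simp only [Set.indicator_of_mem hx]
      exact le_abs_self _
    · simp only [Set.indicator_of_notMem hx, sub_zero, sub_self]
      exact abs_nonneg _
  exact h1.trans (tv_prod p r hp hr hp1 hr1 n)

lemma renyi_two {k : ℕ} (hk : 0 < k) (α : ℝ) (a b a' b' : ℝ) :
    renyiDiv α (fun i : Fin k => if (i : ℕ) = 0 then a else b)
        (fun i => if (i : ℕ) = 0 then a' else b')
      = (1 / (α - 1)) * Real.log
          (a ^ α * a' ^ (1 - α) + ((k : ℝ) - 1) * (b ^ α * b' ^ (1 - α))) := by
  unfold renyiDiv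
  congr 1
  have h : ∀ i : Fin k,
      (if (i : ℕ) = 0 then a else b) ^ α * (if (i : ℕ) = 0 then a' else b') ^ (1 - α)
        = if (i : ℕ) = 0 then a ^ α * a' ^ (1 - α) else b ^ α * b' ^ (1 - α) := by
    intro i; by_cases h : (i : ℕ) = 0 <;> simp [h]
  rw [Finset.sum_congr rfl fun i _ => h i, sum_if_val_zero hk]

set_option maxHeartbeats 2000000 in
/-- super-polynomial sample complexity blow-up for
negligible reference probabilities. -/
theorem negligible_mass_blowup (α c : ℝ) (hα : 1 < α) (hc : 0 < c) :
    ∃ δ₀ c' : ℝ, ∃ k₀ : ℕ, 0 < δ₀ ∧ 0 < c' ∧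
      ∀ k : ℕ, k₀ ≤ k →
      ∀ (n : ℕ) (f : (Fin n → Fin k) → ℝ),
        IsEstimator n α δ₀ (1/3)
          (fun i => if (i : ℕ) = 0 then (k : ℝ) ^ (-c)
                    else (1 - (k : ℝ) ^ (-c)) / ((k : ℝ) - 1)) f →
        c' * (k : ℝ) ^ (c * (α - 1) / α) ≤ (n : ℝ) := by
  have hα1 : (0:ℝ) < α - 1 := by linarith
  have hα0 : (0:ℝ) < α := by linarith
  have hαne : α ≠ 0 := ne_of_gt hα0
  set B : ℝ := (2:ℝ) ^ (-α) with hB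
  have hBpos : 0 < B := Real.rpow_pos_of_pos (by norm_num) _
  set G : ℝ := (1/(α-1)) * Real.log (1 + B) with hG
  have hGpos : 0 < G := mul_pos (by positivity) (Real.log_pos (by linarith))
  set δ' : ℝ := 1 - Real.exp (-(G/2)) with hδ'
  have hexp1 : Real.exp (-(G/2)) < 1 := by
    rw [show (1:ℝ) = Real.exp 0 by rw [Real.exp_zero]]
    exact Real.exp_lt_exp.mpr (by linarith)
  have hδ'pos : 0 < δ' := by simp only [hδ']; linarith
  have hδ'lt1 : δ' < 1 := by
    have := Real.exp_pos (-(G/2)); simp only [hδ']; linarith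
  set d : ℝ := c * (α - 1) / α with hd
  have hdpos : 0 < d := div_pos (mul_pos hc hα1) hα0
  have t1 : Filter.Tendsto (fun k : ℕ => (k:ℝ) ^ (-d)) Filter.atTop (nhds 0) :=
    (tendsto_rpow_neg_atTop hdpos).comp tendsto_natCast_atTop_atTop
  have t2 : Filter.Tendsto (fun k : ℕ => (k:ℝ) ^ (-c)) Filter.atTop (nhds 0) :=
    (tendsto_rpow_neg_atTop hc).comp tendsto_natCast_atTop_atTop
  have e1 : ∀ᶠ k : ℕ in Filter.atTop, (k:ℝ) ^ (-d) < 1/2 :=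
    t1.eventually (gt_mem_nhds (by norm_num))
  have e2 : ∀ᶠ k : ℕ in Filter.atTop, (k:ℝ) ^ (-c) < δ' :=
    t2.eventually (gt_mem_nhds hδ'pos)
  have e3 : ∀ᶠ k : ℕ in Filter.atTop, 2 ≤ k := Filter.eventually_ge_atTop 2
  obtain ⟨k₀, hk₀⟩ := Filter.eventually_atTop.mp ((e1.and e2).and e3)
  refine ⟨G/8, 1/6, k₀, by linarith, by norm_num, ?_⟩
  intro k hk n f hest
  obtain ⟨⟨ht2, hule⟩, hk2⟩ := hk₀ k hk
  set K : ℝ := (k:ℝ) with hK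
  have hK2 : (2:ℝ) ≤ K := by rw [hK]; exact_mod_cast hk2
  have hK0 : (0:ℝ) < K := by linarith
  have hK1 : (0:ℝ) < K - 1 := by linarith
  set u : ℝ := K ^ (-c) with huu
  set t : ℝ := K ^ (-d) with htt
  have hupos : 0 < u := Real.rpow_pos_of_pos hK0 _
  have htpos : 0 < t := Real.rpow_pos_of_pos hK0 _
  have hu1 : u < 1 := lt_trans hule hδ'lt1
  have h1u : 0 < 1 - u := by linarith
  have h1t : (1:ℝ)/2 ≤ 1 - t := by linarith
  have hkpos : 0 < k := by omega
  -- the two distributions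
  have hd0 : IsDist (fun i : Fin k => if (i:ℕ) = 0 then (0:ℝ) else 1/(K-1)) := by
    constructor
    · intro i
      by_cases h : (i:ℕ) = 0
      · simp [h]
      · simp only [h, if_false]
        exact div_nonneg (by norm_num) hK1.le
    · rw [sum_if_val_zero hkpos]; field_simp; rw [hK]; ring
  have hd1 : IsDist (fun i : Fin k => if (i:ℕ) = 0 then t else (1-t)/(K-1)) := by
    constructor
    · intro i
      by_cases h : (i:ℕ) = 0 <;> simp [h]
      · exact htpos.le
      · apply div_nonneg (by linarith) hK1.le
    · rw [sum_if_val_zero hkpos]; field_simp; rw [hK]; ring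
  -- Rényi divergence values
  have e0 : (K-1)^α * (K-1)^(1-α) = K-1 := by
    rw [← Real.rpow_add hK1, show α + (1-α) = 1 by ring, Real.rpow_one]
  have hne1 : (K-1)^α ≠ 0 := ne_of_gt (Real.rpow_pos_of_pos hK1 _)
  have hne2 : (K-1)^(1-α) ≠ 0 := ne_of_gt (Real.rpow_pos_of_pos hK1 _)
  have hD0 : renyiDiv α (fun i : Fin k => if (i:ℕ) = 0 then (0:ℝ) else 1/(K-1))
      (fun i => if (i:ℕ) = 0 then u else (1-u)/(K-1)) = -Real.log (1-u) := by
    rw [renyi_two hkpos]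
    have key : (0:ℝ)^α * u^(1-α)
        + (K-1) * ((1/(K-1))^α * ((1-u)/(K-1))^(1-α)) = (1-u)^(1-α) := by
      rw [Real.zero_rpow hαne, zero_mul, zero_add, Real.div_rpow (by norm_num) hK1.le,
        Real.div_rpow h1u.le hK1.le, Real.one_rpow]
      rw [show (K-1) * (1/(K-1)^α * ((1-u)^(1-α)/(K-1)^(1-α)))
          = (1-u)^(1-α) * ((K-1) / ((K-1)^α * (K-1)^(1-α))) from by ring]
      rw [e0, div_self (ne_of_gt hK1), mul_one]
    rw [key, Real.log_rpow h1u]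
    rw [show (1:ℝ)-α = -(α-1) from by ring, neg_mul, mul_neg, one_div,
      inv_mul_cancel_left₀ (ne_of_gt hα1)]
  have hD1 : G ≤ renyiDiv α (fun i : Fin k => if (i:ℕ) = 0 then t else (1-t)/(K-1))
      (fun i => if (i:ℕ) = 0 then u else (1-u)/(K-1)) := by
    rw [renyi_two hkpos]
    have key1 : t^α * u^(1-α) = 1 := by
      rw [htt, huu, ← Real.rpow_mul hK0.le, ← Real.rpow_mul hK0.le, ← Real.rpow_add hK0,
        show -d*α + -c*(1-α) = 0 by rw [hd]; field_simp; ring, Real.rpow_zero]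
    have key2 : ((1-t)/(K-1))^α * ((1-u)/(K-1))^(1-α)
        = ((1-t)^α * (1-u)^(1-α)) / (K-1) := by
      rw [Real.div_rpow (by linarith) hK1.le, Real.div_rpow h1u.le hK1.le,
        div_mul_div_comm, e0]
    rw [key1, key2]
    have hcan : 1 + (K - 1) * ((1-t)^α * (1-u)^(1-α) / (K-1))
        = 1 + (1-t)^α * (1-u)^(1-α) := by field_simp
    rw [hcan]
    have hBle : B ≤ (1-t)^α := by
      rw [hB, Real.rpow_neg (by norm_num : (0:ℝ) ≤ 2),
        ← Real.inv_rpow (by norm_num : (0:ℝ) ≤ 2)]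
      exact Real.rpow_le_rpow (by norm_num) (by norm_num; linarith) hα0.le
    have h1le : (1:ℝ) ≤ (1-u)^(1-α) := by
      have h' := Real.rpow_le_rpow_of_exponent_ge h1u (by linarith : 1-u ≤ 1)
        (by linarith : 1-α ≤ (0:ℝ))
      rwa [Real.rpow_zero] at h'
    have hprod : B ≤ (1-t)^α * (1-u)^(1-α) := by
      have hnn : 0 ≤ (1-t)^α := Real.rpow_nonneg (by linarith) _
      nlinarith
    rw [hG]
    have hlog : Real.log (1 + B) ≤ Real.log (1 + (1-t)^α * (1-u)^(1-α)) := by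
      apply Real.log_le_log (by positivity)
      linarith
    exact mul_le_mul_of_nonneg_left hlog (by positivity)
  -- instantiate the estimator at the two distributions
  have h0 := hest _ hd0
  have h1 := hest _ hd1
  rw [hD0] at h0
  have hD0le : -Real.log (1-u) ≤ G/2 := by
    have hle : Real.exp (-(G/2)) ≤ 1 - u := by
      have h' := hule
      rw [hδ'] at h'
      linarith
    have := (Real.le_log_iff_exp_le h1u).mpr hle
    linarith
  set D1v := renyiDiv α (fun i : Fin k => if (i:ℕ) = 0 then t else (1-t)/(K-1))
      (fun i => if (i:ℕ) = 0 then u else (1-u)/(K-1)) with hD1v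
  set A : Set (Fin n → Fin k) := {x | G/8 < |f x - (-Real.log (1-u))|} with hA
  have hsub : Aᶜ ⊆ {x | G/8 < |f x - D1v|} := by
    intro x hx
    simp only [Set.mem_compl_iff, hA, Set.mem_setOf_eq, not_lt] at hx
    have habs := abs_le.mp hx
    have hgt : G/8 < D1v - f x := by
      have h1' := habs.2
      linarith [hD1, hD0le]
    simp only [Set.mem_setOf_eq]
    calc G/8 < D1v - f x := hgt
      _ ≤ |D1v - f x| := le_abs_self _
      _ = |f x - D1v| := abs_sub_comm _ _
  have hm : iidProb n (fun i : Fin k => if (i:ℕ) = 0 then t else (1-t)/(K-1)) Aᶜ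
      < 1/3 := lt_of_le_of_lt (iidProb_mono _ hd1.1 hsub) h1
  have hco : iidProb n (fun i : Fin k => if (i:ℕ) = 0 then (0:ℝ) else 1/(K-1)) Aᶜ
      = 1 - iidProb n (fun i : Fin k => if (i:ℕ) = 0 then (0:ℝ) else 1/(K-1)) A :=
    iidProb_compl _ hd0.2 A
  have hdiff := iidProb_diff (fun i : Fin k => if (i:ℕ) = 0 then (0:ℝ) else 1/(K-1))
    (fun i : Fin k => if (i:ℕ) = 0 then t else (1-t)/(K-1))
    hd0.1 hd1.1 hd0.2 hd1.2 Aᶜ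
  have hsum2t : (∑ i : Fin k, |(if (i:ℕ) = 0 then (0:ℝ) else 1/(K-1))
      - (if (i:ℕ) = 0 then t else (1-t)/(K-1))|) = 2*t := by
    have h : ∀ i : Fin k, |(if (i:ℕ) = 0 then (0:ℝ) else 1/(K-1))
        - (if (i:ℕ) = 0 then t else (1-t)/(K-1))|
          = if (i:ℕ) = 0 then t else t/(K-1) := by
      intro i
      by_cases h : (i:ℕ) = 0 <;> simp only [h, if_true, if_false]
      · rw [zero_sub, abs_neg, abs_of_nonneg htpos.le]
      · rw [div_sub_div_same, show (1:ℝ) - (1-t) = t by ring,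
          abs_of_nonneg (div_nonneg htpos.le hK1.le)]
    rw [Finset.sum_congr rfl fun i _ => h i, sum_if_val_zero hkpos]
    field_simp
    ring
  rw [hsum2t] at hdiff
  have hfinal : (1:ℝ)/3 < (n:ℝ) * (2*t) := by linarith
  have hmul : K^d * t = 1 := by
    rw [htt, ← Real.rpow_add hK0]
    simp
  have hKd : 0 < K^d := Real.rpow_pos_of_pos hK0 _
  have h6 : (1/6:ℝ) < (n:ℝ) * t := by linarith
  have hlt : (1/6:ℝ) * K ^ d < (n:ℝ) := by
    calc (1/6:ℝ) * K ^ d < ((n:ℝ)*t) * K^d := mul_lt_mul_of_pos_right h6 hKd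
      _ = (n:ℝ) * (K^d * t) := by ring
      _ = (n:ℝ) := by rw [hmul, mul_one]
  linarith
end

section
/- Let α ≥ 2 be an integer, let p, q be distributions on A = {1,…,k} with q_i > 0 for every i, let n ≥ 1 be an integer, and let N_1,…,N_k be independent Poisson random variables with N_i having mean n·p_i. Then the estimator X = n^{−α}·Σ_{i=1}^k q_i^{1−α}·N_i^{α̲} satisfies Var[X] ≤ Σ_{r=0}^{α−1} binom(α,r)·α^{α−r}·n^{r−α}·Σ_{i=1}^k p_i^{α+r} q_i^{2−2α}. -/
open Finset Real

/-- Probability mass function of a Poisson random variable with mean `l`. -/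
noncomputable def poissonPMF (l : ℝ) (j : ℕ) : ℝ :=
  Real.exp (-l) * l ^ j / (Nat.factorial j)

/-- Expectation of `g` under `k` independent Poisson random variables with
means `lam i`. -/
noncomputable def poissonE {k : ℕ} (lam : Fin k → ℝ) (g : (Fin k → ℕ) → ℝ) : ℝ :=
  ∑' ν : Fin k → ℕ, (∏ i, poissonPMF (lam i) (ν i)) * g ν

lemma poissonPMF_nonneg {l : ℝ} (hl : 0 ≤ l) (j : ℕ) : 0 ≤ poissonPMF l j := by
  unfold poissonPMF; positivity

lemma poissonPMF_eq (l : ℝ) (j : ℕ) : poissonPMF l j = Real.exp (-l) * (l ^ j / j.factorial) := by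
  unfold poissonPMF; ring

lemma summable_poissonPMF (l : ℝ) : Summable (poissonPMF l) := by
  rw [show poissonPMF l = fun j => Real.exp (-l) * (l ^ j / j.factorial) from funext (poissonPMF_eq l)]
  exact (Real.summable_pow_div_factorial l).mul_left _

lemma tsum_poissonPMF (l : ℝ) : ∑' j, poissonPMF l j = 1 := by
  simp only [poissonPMF_eq]
  rw [tsum_mul_left]
  have h : ∑' n : ℕ, l ^ n / (n.factorial : ℝ) = Real.exp l := by
    rw [Real.exp_eq_exp_ℝ, NormedSpace.exp_eq_tsum_div]
  rw [h, ← Real.exp_add]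
  simp

lemma desc_factorial_mul (m β : ℕ) :
    ((m + β).descFactorial β : ℝ) * m.factorial = (m + β).factorial := by
  rw [Nat.add_descFactorial_eq_ascFactorial]
  exact_mod_cast congrArg (Nat.cast (R := ℝ))
    (by rw [Nat.mul_comm]; exact Nat.factorial_mul_ascFactorial m β)

lemma pmf_shift (l : ℝ) (β m : ℕ) :
    poissonPMF l (m + β) * ((m + β).descFactorial β : ℝ) = l ^ β * poissonPMF l m := by
  unfold poissonPMF
  have h1 : ((m + β).factorial : ℝ) ≠ 0 := Nat.cast_ne_zero.mpr (Nat.factorial_ne_zero _)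
  have h2 : ((m).factorial : ℝ) ≠ 0 := Nat.cast_ne_zero.mpr (Nat.factorial_ne_zero _)
  have key := desc_factorial_mul m β
  field_simp
  rw [pow_add]
  linear_combination (l ^ m * l ^ β) * key

lemma shift_tsum {F G : ℕ → ℝ} (β : ℕ) (h0 : ∀ m < β, F m = 0)
    (hshift : ∀ m, F (m + β) = G m) (hG : Summable G) :
    Summable F ∧ ∑' m, F m = ∑' m, G m := by
  have hinj : Function.Injective (fun m : ℕ => m + β) := fun a b h => by simpa using h
  have hrange : ∀ x ∉ Set.range (fun m : ℕ => m + β), F x = 0 := by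
    intro x hx
    apply h0
    by_contra h
    push_neg at h
    exact hx ⟨x - β, by simp; omega⟩
  have hcomp : (F ∘ fun m : ℕ => m + β) = G := funext fun m => hshift m
  have hs : Summable F := (hinj.summable_iff hrange).mp (hcomp ▸ hG)
  refine ⟨hs, ?_⟩
  have hsupp : Function.support F ⊆ Set.range (fun m : ℕ => m + β) := by
    intro x hx
    by_contra hc
    exact hx (hrange x hc)
  rw [← hinj.tsum_eq hsupp]
  exact tsum_congr fun m => hshift m

lemma moment_desc (l : ℝ) (β : ℕ) :
    Summable (fun m => poissonPMF l m * (m.descFactorial β : ℝ)) ∧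
    ∑' m, poissonPMF l m * (m.descFactorial β : ℝ) = l ^ β := by
  have h := shift_tsum (F := fun m => poissonPMF l m * (m.descFactorial β : ℝ))
    (G := fun m => l ^ β * poissonPMF l m) β
    (fun m hm => by simp [Nat.descFactorial_eq_zero_iff_lt.mpr hm])
    (fun m => pmf_shift l β m)
    ((summable_poissonPMF l).mul_left _)
  refine ⟨h.1, ?_⟩
  rw [h.2, tsum_mul_left, tsum_poissonPMF, mul_one]

lemma vand (m α : ℕ) : (m + α).descFactorial α =
    ∑ ij ∈ Finset.HasAntidiagonal.antidiagonal α, α.choose ij.1 * (m.descFactorial ij.1 * α.descFactorial ij.2) := by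
  rw [Nat.descFactorial_eq_factorial_mul_choose, Nat.add_choose_eq, Finset.mul_sum]
  refine Finset.sum_congr rfl ?_
  rintro ⟨a, b⟩ hab
  rw [Finset.HasAntidiagonal.mem_antidiagonal] at hab
  rw [Nat.descFactorial_eq_factorial_mul_choose, Nat.descFactorial_eq_factorial_mul_choose]
  have key : α.choose a * a.factorial * b.factorial = α.factorial := by
    have h := Nat.choose_mul_factorial_mul_factorial (show a ≤ α by omega)
    rwa [show α - a = b by omega] at h
  calc α.factorial * (m.choose a * α.choose b)
      = (α.choose a * a.factorial * b.factorial) * (m.choose a * α.choose b) := by rw [key]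
    _ = α.choose a * (a.factorial * m.choose a * (b.factorial * α.choose b)) := by ring

noncomputable def Gaux (l : ℝ) (α : ℕ) (m : ℕ) : ℝ :=
  ∑ ij ∈ Finset.HasAntidiagonal.antidiagonal α, ((α.choose ij.1 : ℝ) * (α.descFactorial ij.2 : ℝ) * l ^ α) *
    (poissonPMF l m * (m.descFactorial ij.1 : ℝ))

lemma moment2 (l : ℝ) (α : ℕ) :
    Summable (fun m => poissonPMF l m * (m.descFactorial α : ℝ) * (m.descFactorial α : ℝ)) ∧
    ∑' m, poissonPMF l m * (m.descFactorial α : ℝ) * (m.descFactorial α : ℝ)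
      = ∑ k ∈ Finset.range (α + 1),
          (α.choose k : ℝ) * (α.descFactorial (α - k) : ℝ) * l ^ (α + k) := by
  have hshift : ∀ m, poissonPMF l (m + α) * ((m + α).descFactorial α : ℝ)
      * ((m + α).descFactorial α : ℝ) = Gaux l α m := by
    intro m
    have h1 : poissonPMF l (m + α) * ((m + α).descFactorial α : ℝ)
        * ((m + α).descFactorial α : ℝ)
        = (l ^ α * poissonPMF l m) * ((m + α).descFactorial α : ℝ) := by
      rw [← pmf_shift l α m]
    have h2 : ((m + α).descFactorial α : ℝ) = ∑ ij ∈ Finset.HasAntidiagonal.antidiagonal α,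
        (α.choose ij.1 : ℝ) * ((m.descFactorial ij.1 : ℝ) * (α.descFactorial ij.2 : ℝ)) := by
      exact_mod_cast congrArg (Nat.cast (R := ℝ)) (vand m α)
    rw [h1, h2, Gaux, Finset.mul_sum]
    exact Finset.sum_congr rfl fun ij _ => by ring
  have hG : Summable (Gaux l α) :=
    summable_sum fun ij _ => ((moment_desc l ij.1).1.mul_left _)
  have h := shift_tsum
    (F := fun m => poissonPMF l m * (m.descFactorial α : ℝ) * (m.descFactorial α : ℝ))
    (G := Gaux l α) α
    (fun m hm => by simp [Nat.descFactorial_eq_zero_iff_lt.mpr hm])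
    hshift hG
  refine ⟨h.1, ?_⟩
  rw [h.2]
  have h5 : ∑' m, Gaux l α m = ∑ ij ∈ Finset.HasAntidiagonal.antidiagonal α,
      ∑' m, ((α.choose ij.1 : ℝ) * (α.descFactorial ij.2 : ℝ) * l ^ α) *
        (poissonPMF l m * (m.descFactorial ij.1 : ℝ)) :=
    Summable.tsum_finsetSum fun ij _ => ((moment_desc l ij.1).1.mul_left _)
  rw [h5, Finset.Nat.sum_antidiagonal_eq_sum_range_succ_mk]
  refine Finset.sum_congr rfl fun k hk => ?_
  rw [tsum_mul_left, (moment_desc l k).2, pow_add]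
  ring

lemma hasSum_pi {k : ℕ} (f : Fin k → ℕ → ℝ) (h0 : ∀ i j, 0 ≤ f i j)
    (hs : ∀ i, Summable (f i)) :
    HasSum (fun ν : Fin k → ℕ => ∏ i, f i (ν i)) (∏ i, ∑' j, f i j) := by
  induction k with
  | zero =>
    have h1 : (fun ν : Fin 0 → ℕ => ∏ i, f i (ν i)) = fun _ => (1 : ℝ) := by
      funext ν; simp
    rw [h1, show (∏ i : Fin 0, ∑' j, f i j) = (1 : ℝ) by simp]
    have := hasSum_single (f := fun _ : Fin 0 → ℕ => (1 : ℝ)) default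
      (fun b hb => absurd (Subsingleton.elim b default) hb)
    simpa using this
  | succ k ih =>
    have hF := (hs 0).hasSum
    have hG := ih (fun i => f i.succ) (fun i j => h0 _ _) (fun i => hs _)
    have hprod : Summable (fun x : ℕ × (Fin k → ℕ) => f 0 x.1 * ∏ i, f i.succ (x.2 i)) :=
      by
      apply Summable.mul_of_nonneg (hs 0) hG.summable
      · intro j; exact h0 0 j
      · intro ν; exact Finset.prod_nonneg fun i _ => h0 _ _
    have h2 := hF.mul hG hprod
    have h4 : (fun x : ℕ × (Fin k → ℕ) => f 0 x.1 * ∏ i, f i.succ (x.2 i))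
        ∘ (Fin.consEquiv (fun _ : Fin (k + 1) => ℕ)).symm = fun ν : Fin (k + 1) → ℕ => ∏ i, f i (ν i) := by
      funext ν
      simp [Fin.prod_univ_succ, Fin.tail, Fin.consEquiv]
    rw [show (∏ i : Fin (k + 1), ∑' j, f i j)
        = (∑' j, f 0 j) * ∏ i : Fin k, ∑' j, f i.succ j from Fin.prod_univ_succ _, ← h4]
    exact ((Fin.consEquiv (fun _ : Fin (k + 1) => ℕ)).symm.hasSum_iff).mpr h2

lemma hasSum_P_mul {k : ℕ} (lam : Fin k → ℝ) (u : Fin k → ℕ → ℝ)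
    (h0 : ∀ l m, 0 ≤ poissonPMF (lam l) m * u l m)
    (hsum : ∀ l, Summable fun m => poissonPMF (lam l) m * u l m) :
    HasSum (fun ν : Fin k → ℕ => (∏ l, poissonPMF (lam l) (ν l)) * ∏ l, u l (ν l))
      (∏ l, ∑' m, poissonPMF (lam l) m * u l m) := by
  have h := hasSum_pi (fun l m => poissonPMF (lam l) m * u l m) h0 hsum
  have he : (fun ν : Fin k → ℕ => ∏ l, poissonPMF (lam l) (ν l) * u l (ν l))
      = fun ν => (∏ l, poissonPMF (lam l) (ν l)) * ∏ l, u l (ν l) := by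
    funext ν; rw [Finset.prod_mul_distrib]
  rwa [he] at h

lemma ite_df_nonneg {c : Prop} [Decidable c] (x : ℕ) : (0:ℝ) ≤ if c then (x : ℝ) else 1 := by
  split_ifs <;> positivity

lemma hasSum_V (α : ℕ) {k : ℕ} (lam : Fin k → ℝ) (hlam : ∀ l, 0 ≤ lam l) (i : Fin k) :
    HasSum (fun ν : Fin k → ℕ => (∏ l, poissonPMF (lam l) (ν l)) * ((ν i).descFactorial α : ℝ))
      (lam i ^ α) := by
  have h := hasSum_P_mul lam (fun l m => if i = l then (m.descFactorial α : ℝ) else 1)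
    (fun l m => mul_nonneg (poissonPMF_nonneg (hlam l) m) (ite_df_nonneg _))
    (fun l => by
      rcases eq_or_ne i l with hil | hil
      · subst hil; simpa using (moment_desc (lam i) α).1
      · simpa [hil] using summable_poissonPMF (lam l))
  have hterm : ∀ l, ∑' m, poissonPMF (lam l) m * (if i = l then ((m.descFactorial α : ℝ)) else 1)
      = if i = l then lam l ^ α else 1 := by
    intro l
    rcases eq_or_ne i l with hil | hil
    · subst hil; simpa using (moment_desc (lam i) α).2
    · simp [hil, tsum_poissonPMF]
  simp only [hterm, Finset.prod_mul_distrib, Finset.prod_ite_eq, Finset.mem_univ, if_true] at h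
  exact h

lemma hasSum_W_off (α : ℕ) {k : ℕ} (lam : Fin k → ℝ) (hlam : ∀ l, 0 ≤ lam l) {i j : Fin k}
    (hij : i ≠ j) :
    HasSum (fun ν : Fin k → ℕ => (∏ l, poissonPMF (lam l) (ν l)) *
      (((ν i).descFactorial α : ℝ) * ((ν j).descFactorial α : ℝ)))
      (lam i ^ α * lam j ^ α) := by
  have h := hasSum_P_mul lam
    (fun l m => (if i = l then (m.descFactorial α : ℝ) else 1) *
      (if j = l then (m.descFactorial α : ℝ) else 1))
    (fun l m => mul_nonneg (poissonPMF_nonneg (hlam l) m)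
      (mul_nonneg (ite_df_nonneg _) (ite_df_nonneg _)))
    (fun l => by
      rcases eq_or_ne i l with hil | hil <;> rcases eq_or_ne j l with hjl | hjl
      · exact absurd (hil.trans hjl.symm) hij
      · subst hil; simpa [hjl] using (moment_desc (lam i) α).1
      · subst hjl; simpa [hil] using (moment_desc (lam j) α).1
      · simpa [hil, hjl] using summable_poissonPMF (lam l))
  have hterm : ∀ l, ∑' m, poissonPMF (lam l) m *
      ((if i = l then ((m.descFactorial α : ℝ)) else 1) *
        (if j = l then ((m.descFactorial α : ℝ)) else 1))
      = (if i = l then lam l ^ α else 1) * (if j = l then lam l ^ α else 1) := by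
    intro l
    rcases eq_or_ne i l with hil | hil <;> rcases eq_or_ne j l with hjl | hjl
    · exact absurd (hil.trans hjl.symm) hij
    · subst hil; simpa [hjl] using (moment_desc (lam i) α).2
    · subst hjl; simpa [hil] using (moment_desc (lam j) α).2
    · simp [hil, hjl, tsum_poissonPMF]
  simp only [hterm, Finset.prod_mul_distrib, Finset.prod_ite_eq, Finset.mem_univ, if_true] at h
  exact h

lemma hasSum_W_diag (α : ℕ) {k : ℕ} (lam : Fin k → ℝ) (hlam : ∀ l, 0 ≤ lam l) (i : Fin k) :
    HasSum (fun ν : Fin k → ℕ => (∏ l, poissonPMF (lam l) (ν l)) *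
      (((ν i).descFactorial α : ℝ) * ((ν i).descFactorial α : ℝ)))
      (∑ t ∈ Finset.range (α + 1),
        (α.choose t : ℝ) * (α.descFactorial (α - t) : ℝ) * lam i ^ (α + t)) := by
  have h := hasSum_P_mul lam
    (fun l m => (if i = l then (m.descFactorial α : ℝ) else 1) *
      (if i = l then (m.descFactorial α : ℝ) else 1))
    (fun l m => mul_nonneg (poissonPMF_nonneg (hlam l) m)
      (mul_nonneg (ite_df_nonneg _) (ite_df_nonneg _)))
    (fun l => by
      rcases eq_or_ne i l with hil | hil
      · subst hil; simpa [mul_assoc] using (moment2 (lam i) α).1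
      · simpa [hil] using summable_poissonPMF (lam l))
  have hterm : ∀ l, ∑' m, poissonPMF (lam l) m *
      ((if i = l then ((m.descFactorial α : ℝ)) else 1) *
        (if i = l then ((m.descFactorial α : ℝ)) else 1))
      = if i = l then (∑ t ∈ Finset.range (α + 1),
          (α.choose t : ℝ) * (α.descFactorial (α - t) : ℝ) * lam l ^ (α + t)) else 1 := by
    intro l
    rcases eq_or_ne i l with hil | hil
    · subst hil; simpa [mul_assoc] using (moment2 (lam i) α).2
    · simp [hil, tsum_poissonPMF]
  simp only [hterm, Finset.prod_mul_distrib, Finset.prod_ite_eq, Finset.mem_univ, if_true] at h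
  exact h

/-- variance bound for the bias-corrected power sum estimator
under Poisson sampling. -/
theorem poissonized_estimator_variance (α : ℕ) (hα : 2 ≤ α) (k : ℕ)
    (p q : Fin k → ℝ) (hp : IsDist p) (hq : IsDist q) (hqpos : ∀ i, 0 < q i)
    (n : ℕ) (hn : 1 ≤ n) :
    poissonE (fun i => (n : ℝ) * p i)
        (fun ν => ((n : ℝ) ^ (-(α : ℝ)) *
          ∑ i, q i ^ (1 - (α : ℝ)) * ((ν i).descFactorial α : ℝ)) ^ 2) -
      (poissonE (fun i => (n : ℝ) * p i)
        (fun ν => (n : ℝ) ^ (-(α : ℝ)) *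
          ∑ i, q i ^ (1 - (α : ℝ)) * ((ν i).descFactorial α : ℝ))) ^ 2
    ≤ ∑ r ∈ Finset.range α, (α.choose r : ℝ) * (α : ℝ) ^ ((α : ℝ) - r) *
        (n : ℝ) ^ ((r : ℝ) - α) *
        ∑ i, p i ^ ((α : ℝ) + r) * q i ^ (2 - 2 * (α : ℝ)) := by
  have hn0 : (0 : ℝ) < (n : ℝ) := by exact_mod_cast hn
  set lam : Fin k → ℝ := fun i => (n : ℝ) * p i with hlamdef
  have hlam : ∀ l, 0 ≤ lam l := fun l => mul_nonneg hn0.le (hp.1 l)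
  have hV := fun i => hasSum_V α lam hlam i
  have hW : ∀ i j : Fin k, HasSum (fun ν : Fin k → ℕ => (∏ l, poissonPMF (lam l) (ν l)) *
      (((ν i).descFactorial α : ℝ) * ((ν j).descFactorial α : ℝ)))
      (if i = j then ∑ t ∈ Finset.range (α + 1),
          (α.choose t : ℝ) * (α.descFactorial (α - t) : ℝ) * lam i ^ (α + t)
        else lam i ^ α * lam j ^ α) := by
    intro i j
    rcases eq_or_ne i j with h | h
    · subst h; simpa using hasSum_W_diag α lam hlam i
    · simpa [h] using hasSum_W_off α lam hlam h
  have hE1 : HasSum (fun ν : Fin k → ℕ => (∏ l, poissonPMF (lam l) (ν l)) *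
      ((n : ℝ) ^ (-(α : ℝ)) * ∑ i, q i ^ (1 - (α : ℝ)) * ((ν i).descFactorial α : ℝ)))
      (∑ i, ((n : ℝ) ^ (-(α : ℝ)) * q i ^ (1 - (α : ℝ))) * lam i ^ α) := by
    have h := hasSum_sum (s := Finset.univ)
      (f := fun (i : Fin k) (ν : Fin k → ℕ) =>
        ((n : ℝ) ^ (-(α : ℝ)) * q i ^ (1 - (α : ℝ))) *
          ((∏ l, poissonPMF (lam l) (ν l)) * ((ν i).descFactorial α : ℝ)))
      (a := fun i => ((n : ℝ) ^ (-(α : ℝ)) * q i ^ (1 - (α : ℝ))) * lam i ^ α)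
      (fun i _ => (hV i).mul_left _)
    have hfun : (fun ν : Fin k → ℕ => (∏ l, poissonPMF (lam l) (ν l)) *
        ((n : ℝ) ^ (-(α : ℝ)) * ∑ i, q i ^ (1 - (α : ℝ)) * ((ν i).descFactorial α : ℝ)))
        = fun ν => ∑ i, ((n : ℝ) ^ (-(α : ℝ)) * q i ^ (1 - (α : ℝ))) *
          ((∏ l, poissonPMF (lam l) (ν l)) * ((ν i).descFactorial α : ℝ)) := by
      funext ν
      rw [Finset.mul_sum, Finset.mul_sum]
      exact Finset.sum_congr rfl fun i _ => by ring
    rw [hfun]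
    exact h
  have hE2 : HasSum (fun ν : Fin k → ℕ => (∏ l, poissonPMF (lam l) (ν l)) *
      (((n : ℝ) ^ (-(α : ℝ)) * ∑ i, q i ^ (1 - (α : ℝ)) * ((ν i).descFactorial α : ℝ)) ^ 2))
      (∑ i, ∑ j, (((n : ℝ) ^ (-(α : ℝ)) * q i ^ (1 - (α : ℝ))) *
          ((n : ℝ) ^ (-(α : ℝ)) * q j ^ (1 - (α : ℝ)))) *
        (if i = j then ∑ t ∈ Finset.range (α + 1),
            (α.choose t : ℝ) * (α.descFactorial (α - t) : ℝ) * lam i ^ (α + t)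
          else lam i ^ α * lam j ^ α)) := by
    have h := hasSum_sum (s := Finset.univ)
      (f := fun (i : Fin k) (ν : Fin k → ℕ) =>
        ∑ j, (((n : ℝ) ^ (-(α : ℝ)) * q i ^ (1 - (α : ℝ))) *
            ((n : ℝ) ^ (-(α : ℝ)) * q j ^ (1 - (α : ℝ)))) *
          ((∏ l, poissonPMF (lam l) (ν l)) *
            (((ν i).descFactorial α : ℝ) * ((ν j).descFactorial α : ℝ))))
      (a := fun i => ∑ j, (((n : ℝ) ^ (-(α : ℝ)) * q i ^ (1 - (α : ℝ))) *
            ((n : ℝ) ^ (-(α : ℝ)) * q j ^ (1 - (α : ℝ)))) *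
        (if i = j then ∑ t ∈ Finset.range (α + 1),
            (α.choose t : ℝ) * (α.descFactorial (α - t) : ℝ) * lam i ^ (α + t)
          else lam i ^ α * lam j ^ α))
      (fun i _ => hasSum_sum (s := Finset.univ) (fun j _ => (hW i j).mul_left _))
    have hfun : (fun ν : Fin k → ℕ => (∏ l, poissonPMF (lam l) (ν l)) *
        (((n : ℝ) ^ (-(α : ℝ)) * ∑ i, q i ^ (1 - (α : ℝ)) * ((ν i).descFactorial α : ℝ)) ^ 2))
        = fun ν => ∑ i, ∑ j, (((n : ℝ) ^ (-(α : ℝ)) * q i ^ (1 - (α : ℝ))) *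
            ((n : ℝ) ^ (-(α : ℝ)) * q j ^ (1 - (α : ℝ)))) *
          ((∏ l, poissonPMF (lam l) (ν l)) *
            (((ν i).descFactorial α : ℝ) * ((ν j).descFactorial α : ℝ))) := by
      funext ν
      rw [pow_two, mul_mul_mul_comm, Finset.sum_mul_sum]
      simp only [Finset.mul_sum]
      exact Finset.sum_congr rfl fun i _ => Finset.sum_congr rfl fun j _ => by ring
    rw [hfun]
    exact h
  have q1 : poissonE lam (fun ν => (n : ℝ) ^ (-(α : ℝ)) *
      ∑ i, q i ^ (1 - (α : ℝ)) * ((ν i).descFactorial α : ℝ)) = _ := hE1.tsum_eq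
  have q2 : poissonE lam (fun ν => ((n : ℝ) ^ (-(α : ℝ)) *
      ∑ i, q i ^ (1 - (α : ℝ)) * ((ν i).descFactorial α : ℝ)) ^ 2) = _ := hE2.tsum_eq
  rw [q1, q2]
  have key : (∑ i, ∑ j, (((n : ℝ) ^ (-(α : ℝ)) * q i ^ (1 - (α : ℝ))) *
          ((n : ℝ) ^ (-(α : ℝ)) * q j ^ (1 - (α : ℝ)))) *
        (if i = j then ∑ t ∈ Finset.range (α + 1),
            (α.choose t : ℝ) * (α.descFactorial (α - t) : ℝ) * lam i ^ (α + t)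
          else lam i ^ α * lam j ^ α))
      - (∑ i, ((n : ℝ) ^ (-(α : ℝ)) * q i ^ (1 - (α : ℝ))) * lam i ^ α) ^ 2
      = ∑ i, (((n : ℝ) ^ (-(α : ℝ)) * q i ^ (1 - (α : ℝ))) *
          ((n : ℝ) ^ (-(α : ℝ)) * q i ^ (1 - (α : ℝ)))) *
        ((∑ t ∈ Finset.range (α + 1),
            (α.choose t : ℝ) * (α.descFactorial (α - t) : ℝ) * lam i ^ (α + t))
          - lam i ^ α * lam i ^ α) := by
    rw [pow_two, Finset.sum_mul_sum, ← Finset.sum_sub_distrib]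
    refine Finset.sum_congr rfl fun i _ => ?_
    rw [← Finset.sum_sub_distrib,
      Finset.sum_eq_single_of_mem i (Finset.mem_univ i)
        (fun j _ hji => by rw [if_neg fun hc => hji hc.symm]; ring),
      if_pos rfl]
    ring
  rw [key]
  have M2diff : ∀ i : Fin k, (∑ t ∈ Finset.range (α + 1),
        (α.choose t : ℝ) * (α.descFactorial (α - t) : ℝ) * lam i ^ (α + t))
        - lam i ^ α * lam i ^ α
      = ∑ r ∈ Finset.range α,
          (α.choose r : ℝ) * (α.descFactorial (α - r) : ℝ) * lam i ^ (α + r) := by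
    intro i
    rw [Finset.sum_range_succ, Nat.choose_self, Nat.sub_self, Nat.descFactorial_zero, pow_add]
    push_cast
    ring
  calc ∑ i, (((n : ℝ) ^ (-(α : ℝ)) * q i ^ (1 - (α : ℝ))) *
          ((n : ℝ) ^ (-(α : ℝ)) * q i ^ (1 - (α : ℝ)))) *
        ((∑ t ∈ Finset.range (α + 1),
            (α.choose t : ℝ) * (α.descFactorial (α - t) : ℝ) * lam i ^ (α + t))
          - lam i ^ α * lam i ^ α)
      = ∑ i, ∑ r ∈ Finset.range α, (((n : ℝ) ^ (-(α : ℝ)) * q i ^ (1 - (α : ℝ))) *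
          ((n : ℝ) ^ (-(α : ℝ)) * q i ^ (1 - (α : ℝ)))) *
        ((α.choose r : ℝ) * (α.descFactorial (α - r) : ℝ) * lam i ^ (α + r)) :=
        Finset.sum_congr rfl fun i _ => by rw [M2diff i, Finset.mul_sum]
    _ = ∑ r ∈ Finset.range α, ∑ i, (((n : ℝ) ^ (-(α : ℝ)) * q i ^ (1 - (α : ℝ))) *
          ((n : ℝ) ^ (-(α : ℝ)) * q i ^ (1 - (α : ℝ)))) *
        ((α.choose r : ℝ) * (α.descFactorial (α - r) : ℝ) * lam i ^ (α + r)) :=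
        Finset.sum_comm
    _ ≤ ∑ r ∈ Finset.range α, (α.choose r : ℝ) * (α : ℝ) ^ ((α : ℝ) - r) *
        (n : ℝ) ^ ((r : ℝ) - α) *
        ∑ i, p i ^ ((α : ℝ) + r) * q i ^ (2 - 2 * (α : ℝ)) := by
      refine Finset.sum_le_sum fun r hr => ?_
      rw [Finset.mul_sum]
      refine Finset.sum_le_sum fun i _ => ?_
      have hr' : r < α := Finset.mem_range.mp hr
      have hdf : ((α.descFactorial (α - r) : ℕ) : ℝ) ≤ (α : ℝ) ^ ((α : ℝ) - (r : ℝ)) := by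
        have h1 : ((α.descFactorial (α - r) : ℕ) : ℝ) ≤ ((α : ℝ)) ^ ((α - r : ℕ)) := by
          exact_mod_cast Nat.descFactorial_le_pow α (α - r)
        rwa [← Real.rpow_natCast (α : ℝ) (α - r), Nat.cast_sub hr'.le] at h1
      have hY : (0 : ℝ) ≤ (α.choose r : ℝ) * ((n : ℝ) ^ ((r : ℝ) - (α : ℝ)) *
          (p i ^ ((α : ℝ) + (r : ℝ)) * q i ^ (2 - 2 * (α : ℝ)))) :=
        mul_nonneg (Nat.cast_nonneg _) (mul_nonneg (Real.rpow_pos_of_pos hn0 _).le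
          (mul_nonneg (Real.rpow_nonneg (hp.1 i) _) (Real.rpow_pos_of_pos (hqpos i) _).le))
      have hl : lam i ^ (α + r) = (n : ℝ) ^ ((α : ℝ) + (r : ℝ)) * p i ^ ((α : ℝ) + (r : ℝ)) := by
        simp only [hlamdef]
        rw [← Real.rpow_natCast ((n : ℝ) * p i) (α + r), Real.mul_rpow hn0.le (hp.1 i)]
        push_cast
        ring
      have hkey : (((n : ℝ) ^ (-(α : ℝ)) * q i ^ (1 - (α : ℝ))) *
            ((n : ℝ) ^ (-(α : ℝ)) * q i ^ (1 - (α : ℝ)))) *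
          ((α.choose r : ℝ) * (α.descFactorial (α - r) : ℝ) * lam i ^ (α + r))
          = (α.descFactorial (α - r) : ℝ) * ((α.choose r : ℝ) * ((n : ℝ) ^ ((r : ℝ) - (α : ℝ)) *
            (p i ^ ((α : ℝ) + (r : ℝ)) * q i ^ (2 - 2 * (α : ℝ))))) := by
        rw [hl]
        have h1 : (n : ℝ) ^ (-(α : ℝ)) * (n : ℝ) ^ (-(α : ℝ)) * (n : ℝ) ^ ((α : ℝ) + (r : ℝ))
            = (n : ℝ) ^ ((r : ℝ) - (α : ℝ)) := by
          rw [← Real.rpow_add hn0, ← Real.rpow_add hn0]; congr 1; ring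
        have h2 : q i ^ (1 - (α : ℝ)) * q i ^ (1 - (α : ℝ)) = q i ^ (2 - 2 * (α : ℝ)) := by
          rw [← Real.rpow_add (hqpos i)]; congr 1; ring
        linear_combination ((α.choose r : ℝ) * (α.descFactorial (α - r) : ℝ) *
            p i ^ ((α : ℝ) + (r : ℝ)) * (q i ^ (1 - (α : ℝ)) * q i ^ (1 - (α : ℝ)))) * h1 +
          ((α.choose r : ℝ) * (α.descFactorial (α - r) : ℝ) *
            p i ^ ((α : ℝ) + (r : ℝ)) * (n : ℝ) ^ ((r : ℝ) - (α : ℝ))) * h2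
      calc (((n : ℝ) ^ (-(α : ℝ)) * q i ^ (1 - (α : ℝ))) *
            ((n : ℝ) ^ (-(α : ℝ)) * q i ^ (1 - (α : ℝ)))) *
          ((α.choose r : ℝ) * (α.descFactorial (α - r) : ℝ) * lam i ^ (α + r))
          = (α.descFactorial (α - r) : ℝ) * ((α.choose r : ℝ) *
            ((n : ℝ) ^ ((r : ℝ) - (α : ℝ)) *
              (p i ^ ((α : ℝ) + (r : ℝ)) * q i ^ (2 - 2 * (α : ℝ))))) := hkey
        _ ≤ (α : ℝ) ^ ((α : ℝ) - (r : ℝ)) * ((α.choose r : ℝ) *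
            ((n : ℝ) ^ ((r : ℝ) - (α : ℝ)) *
              (p i ^ ((α : ℝ) + (r : ℝ)) * q i ^ (2 - 2 * (α : ℝ))))) :=
            mul_le_mul_of_nonneg_right hdf hY
        _ = (α.choose r : ℝ) * (α : ℝ) ^ ((α : ℝ) - r) * (n : ℝ) ^ ((r : ℝ) - α) *
            (p i ^ ((α : ℝ) + r) * q i ^ (2 - 2 * (α : ℝ))) := by ring
end
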